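/- Let T be a measure-preserving invertible transformation of a probability space (Z, μ), and suppose there is a sequence of finite measurable partitions Δ_n of Z with Δ_n = {T^j(A_n^0) : 0 ≤ j < m_n} for some measurable sets A_n^0 and integers m_n → ∞, such that Δ_{n+1} refines Δ_n and each atom of Δ_n is a (disjoint) union of atoms of Δ_{n+1} of the form T^{i + t·m_n}(A_{n+1}^0), and the partitions Δ_n generate the σ-algebra. Then T is approximately transitive: for any f_1,...,f_r ∈ L¹_+(Z,μ) and ε > 0 there exist f ∈ L¹_+(Z,μ), integers n_1,...,n_s and coefficients λ_{j,k} ≥ 0 with ‖f_j − Σ_k λ_{j,k} f∘T^{n_k}‖_1 ≤ ε for all j. -/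

import Mathlib

open MeasureTheory Finset Filter

theorem odometer_tower_structure_implies_AT
    {Z : Type*} [MeasurableSpace Z] (μ : Measure Z) [IsProbabilityMeasure μ]
    (T : Equiv.Perm Z) (hTmeas : Measurable T) (hTinvmeas : Measurable T.symm)
    (hmp : MeasurePreserving T μ μ)
    (A : ℕ → Set Z) (hAmeas : ∀ n, MeasurableSet (A n))
    (m : ℕ → ℕ) (hm : Tendsto m atTop atTop)
    -- the sets `T^j (A n)`, `0 ≤ j < m n`, form a partition of `Z`
    (hpart_disj : ∀ n, Set.Pairwise (Set.Iio (m n))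
      (fun i j => Disjoint ((T ^ i) '' A n) ((T ^ j) '' A n)))
    (hpart_cover : ∀ n, (⋃ j ∈ Finset.range (m n), (T ^ j) '' A n) = Set.univ)
    -- each atom of `Δ n` is a disjoint union of atoms of `Δ (n+1)` of the stated form
    (hrefine : ∀ n, ∀ i < m n,
      (T ^ i) '' A n
        = ⋃ t ∈ Finset.range (m (n + 1) / m n), (T ^ (i + t * m n)) '' A (n + 1))
    -- the partitions generate the σ-algebra
    (hgen : MeasurableSpace.generateFrom
        {S : Set Z | ∃ n, ∃ j < m n, S = (T ^ j) '' A n}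
      = (inferInstance : MeasurableSpace Z)) :
    -- approximate transitivity of T
    ∀ (r : ℕ) (f : Fin r → Z → ℝ),
      (∀ j, Integrable (f j) μ) → (∀ j, ∀ z, 0 ≤ f j z) →
      ∀ ε > (0 : ℝ),
      ∃ (g : Z → ℝ), Integrable g μ ∧ (∀ z, 0 ≤ g z) ∧
      ∃ (s : ℕ) (nk : Fin s → ℤ) (lam : Fin r → Fin s → ℝ),
        (∀ j t, 0 ≤ lam j t) ∧
        ∀ j, ∫ z, |f j z - ∑ t, lam j t * g ((T ^ (nk t)) z)| ∂μ ≤ ε := by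
  classical
  intro r f hfint hfpos ε hε
  -- `Z` is nonempty
  have hZne : (Set.univ : Set Z).Nonempty := by
    rcases (Set.univ : Set Z).eq_empty_or_nonempty with h | h
    · exfalso
      have h1 : μ Set.univ = 1 := measure_univ
      rw [h, measure_empty] at h1
      exact zero_ne_one h1
    · exact h
  -- every `m n` is positive
  have hmpos : ∀ n, 0 < m n := by
    intro n
    rcases Nat.eq_zero_or_pos (m n) with hn | hn
    · exfalso
      have h0 : (Set.univ : Set Z) = ∅ := by
        rw [← hpart_cover n, hn]
        simp
      rw [h0] at hZne
      exact Set.not_nonempty_empty hZne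
    · exact hn
  -- measurability of powers of `T.symm`
  have hMsymm : ∀ i : ℕ, Measurable ((T ^ i).symm : Z → Z) := by
    intro i
    induction i with
    | zero => exact measurable_id
    | succ k ih =>
      have hfun : ((T ^ (k + 1)).symm : Z → Z) = fun z => T.symm ((T ^ k).symm z) := by
        funext z
        rw [pow_succ]
        rfl
      rw [hfun]
      exact hTinvmeas.comp ih
  have hAtomMeas : ∀ n (i : ℕ), MeasurableSet ((T ^ i) '' A n) := by
    intro n i
    rw [Equiv.image_eq_preimage_symm]
    exact hMsymm i (hAmeas n)
  -- the filtration of partition σ-algebras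
  set D : ℕ → Set (Set Z) := fun n => {S | ∃ j < m n, S = (T ^ j) '' A n} with hD
  have hle : ∀ n, MeasurableSpace.generateFrom (D n) ≤ (inferInstance : MeasurableSpace Z) := by
    intro n
    apply MeasurableSpace.generateFrom_le
    rintro S ⟨j, hj, rfl⟩
    exact hAtomMeas n j
  have hmono : ∀ n, MeasurableSpace.generateFrom (D n)
      ≤ MeasurableSpace.generateFrom (D (n + 1)) := by
    intro n
    apply MeasurableSpace.generateFrom_le
    rintro S ⟨i, hi, rfl⟩
    rw [hrefine n i hi]
    refine MeasurableSet.biUnion ((Finset.range (m (n+1) / m n)) : Finset ℕ).countable_toSet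
      (fun t ht => ?_)
    refine MeasurableSpace.measurableSet_generateFrom ⟨i + t * m n, ?_, rfl⟩
    have ht' : t + 1 ≤ m (n + 1) / m n := Finset.mem_range.mp ht
    have hmul : (t + 1) * m n ≤ m (n + 1) := (Nat.le_div_iff_mul_le (hmpos n)).mp ht'
    have : i + t * m n < (t + 1) * m n := by
      have := hi
      nlinarith [hi]
    omega
  let ℱ : Filtration ℕ (inferInstance : MeasurableSpace Z) :=
    { seq := fun n => MeasurableSpace.generateFrom (D n)
      mono' := monotone_nat_of_le_succ hmono
      le' := hle }
  have hsup : (⨆ n, MeasurableSpace.generateFrom (D n)) = (inferInstance : MeasurableSpace Z) := by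
    refine le_antisymm (iSup_le hle) ?_
    rw [← hgen]
    apply MeasurableSpace.generateFrom_le
    rintro S ⟨n, j, hj, rfl⟩
    exact (le_iSup (fun n => MeasurableSpace.generateFrom (D n)) n) _
      (MeasurableSpace.measurableSet_generateFrom ⟨j, hj, rfl⟩)
  -- existence and uniqueness of the atom containing a point
  have hatom_exists : ∀ n z, ∃ i, i < m n ∧ z ∈ (T ^ i) '' A n := by
    intro n z
    have hz : z ∈ (⋃ j ∈ Finset.range (m n), (T ^ j) '' A n) := by
      rw [hpart_cover n]; trivial
    simpa using hz
  have hatom_unique : ∀ n i i', i < m n → i' < m n → ∀ z,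
      z ∈ (T ^ i) '' A n → z ∈ (T ^ i') '' A n → i = i' := by
    intro n i i' hi hi' z hzi hzi'
    by_contra hne
    exact Set.disjoint_left.mp (hpart_disj n hi hi' hne) hzi hzi'
  -- measurable sets in `ℱ n` do not separate points of an atom
  have hkey : ∀ n (S : Set Z), MeasurableSet[MeasurableSpace.generateFrom (D n)] S →
      ∀ i, i < m n → ∀ z ∈ (T ^ i) '' A n, ∀ z' ∈ (T ^ i) '' A n, (z ∈ S ↔ z' ∈ S) := by
    intro n S hS
    induction S, hS using MeasurableSpace.generateFrom_induction with
    | hC t ht _ =>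
      obtain ⟨j, hj, rfl⟩ := ht
      intro i hi z hz z' hz'
      by_cases hij : i = j
      · subst hij
        exact iff_of_true hz hz'
      · constructor
        · intro hzS
          exact absurd (hatom_unique n i j hi hj z hz hzS) hij
        · intro hzS
          exact absurd (hatom_unique n i j hi hj z' hz' hzS) hij
    | empty => simp
    | compl t ht iht =>
      intro i hi z hz z' hz'
      simpa using (iht i hi z hz z' hz').not
    | iUnion s hs ihs =>
      intro i hi z hz z' hz'
      simp only [Set.mem_iUnion]
      exact exists_congr fun k => ihs k i hi z hz z' hz'
  -- `ℱ n`-measurable functions are constant on atoms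
  have hconst : ∀ n (h : Z → ℝ), Measurable[MeasurableSpace.generateFrom (D n)] h →
      ∀ i, i < m n → ∀ z ∈ (T ^ i) '' A n, ∀ z' ∈ (T ^ i) '' A n, h z = h z' := by
    intro n h hh i hi z hz z' hz'
    have hiff := hkey n (h ⁻¹' {h z}) (hh (measurableSet_singleton (h z))) i hi z hz z' hz'
    have hz'' : z' ∈ h ⁻¹' {h z} := hiff.mp rfl
    exact (Set.mem_singleton_iff.mp hz'').symm
  -- L¹ martingale convergence
  haveI : SigmaFinite (μ.trim (le_refl (inferInstance : MeasurableSpace Z))) := by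
    rw [MeasureTheory.trim_eq_self]
    infer_instance
  have hconv : ∀ j : Fin r,
      Tendsto (fun n => eLpNorm (μ[f j| ℱ n] - f j) 1 μ) atTop (nhds 0) := by
    intro j
    have h1 := MeasureTheory.tendsto_eLpNorm_condExp (μ := μ) (ℱ := ℱ) (f j)
    have h2 : μ[f j| ⨆ n, ℱ n] =ᵐ[μ] f j := by
      have hsup' : (⨆ n, (ℱ n : MeasurableSpace Z)) = (inferInstance : MeasurableSpace Z) := hsup
      rw [hsup']
      exact condExp_of_aestronglyMeasurable' le_rfl
        ⟨_, (hfint j).1.stronglyMeasurable_mk, (hfint j).1.ae_eq_mk⟩ (hfint j)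
    refine h1.congr fun n => ?_
    apply eLpNorm_congr_ae
    filter_upwards [h2] with x hx
    simp [hx]
  -- choose a good level `n`
  have hε' : (0 : ENNReal) < ENNReal.ofReal ε := ENNReal.ofReal_pos.mpr hε
  have hev : ∀ᶠ n in atTop, ∀ j : Fin r,
      eLpNorm (μ[f j| ℱ n] - f j) 1 μ < ENNReal.ofReal ε :=
    eventually_all.mpr fun j => (hconv j).eventually (gt_mem_nhds hε')
  obtain ⟨n, hn⟩ := hev.exists
  -- conditional expectations at level `n`
  set h : Fin r → Z → ℝ := fun j => μ[f j| ℱ n] with hh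
  have hhmeas : ∀ j, Measurable[MeasurableSpace.generateFrom (D n)] (h j) :=
    fun j => stronglyMeasurable_condExp.measurable
  -- the candidate function and coefficients
  set g : Z → ℝ := (A n).indicator (fun _ => (1 : ℝ)) with hg
  set lam : Fin r → Fin (m n) → ℝ := fun j t =>
    if hne : ((T ^ (t : ℕ)) '' A n).Nonempty then max (h j hne.some) 0 else 0 with hlam
  refine ⟨g, (integrable_const (1 : ℝ)).indicator (hAmeas n),
    fun z => Set.indicator_nonneg (fun _ _ => zero_le_one) z,
    m n, fun t => -((t : ℕ) : ℤ), lam, ?_, ?_⟩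
  · intro j t
    rw [hlam]
    dsimp only
    split_ifs
    · exact le_max_right _ _
    · exact le_rfl
  -- main estimate
  have hgval : ∀ (i : ℕ) (z : Z),
      g ((T ^ (-(i : ℤ))) z) = if z ∈ (T ^ i) '' A n then (1 : ℝ) else 0 := by
    intro i z
    have hmem : (T ^ (-(i : ℤ))) z ∈ A n ↔ z ∈ (T ^ i) '' A n := by
      rw [zpow_neg, zpow_natCast]
      rw [Set.mem_image_equiv (f := T ^ i)]
      rfl
    rw [hg]
    simp only [Set.indicator_apply]
    exact if_congr hmem rfl rfl
  have hsum : ∀ (j : Fin r) (z : Z),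
      (∑ t : Fin (m n), lam j t * g ((T ^ (-((t : ℕ) : ℤ))) z)) = max (h j z) 0 := by
    intro j z
    obtain ⟨i₀, hi₀, hzmem⟩ := hatom_exists n z
    have hsingle := Finset.sum_eq_single (s := (Finset.univ : Finset (Fin (m n)))) (f := fun t : Fin (m n) =>
        lam j t * g ((T ^ (-((t : ℕ) : ℤ))) z)) (⟨i₀, hi₀⟩ : Fin (m n)) ?_ ?_
    · rw [hsingle]
      have hne : ((T ^ i₀) '' A n).Nonempty := ⟨z, hzmem⟩
      have hlamval : lam j ⟨i₀, hi₀⟩ = max (h j hne.some) 0 := by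
        rw [hlam]; exact dif_pos hne
      rw [hlamval, hgval i₀ z, if_pos hzmem, mul_one]
      have := hconst n (h j) (hhmeas j) i₀ hi₀ hne.some hne.some_mem z hzmem
      rw [this]
    · intro t _ htne
      rw [hgval (t : ℕ) z]
      have : z ∉ (T ^ (t : ℕ)) '' A n := by
        intro hzt
        exact htne (Fin.ext (hatom_unique n (t : ℕ) i₀ t.isLt hi₀ z hzt hzmem))
      rw [if_neg this, mul_zero]
    · intro habs
      exact absurd (Finset.mem_univ _) habs
  intro j
  have hint_h : Integrable (h j) μ := integrable_condExp
  have hint_max : Integrable (fun z => max (h j z) 0) μ := hint_h.pos_part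
  have hpt : ∀ z, |f j z - max (h j z) 0| ≤ |f j z - h j z| := by
    intro z
    rcases le_or_gt 0 (h j z) with hc | hc
    · rw [max_eq_left hc]
    · rw [max_eq_right hc.le, sub_zero, abs_of_nonneg (hfpos j z)]
      calc f j z ≤ f j z - h j z := by linarith
        _ ≤ |f j z - h j z| := le_abs_self _
  have hstep1 : ∫ z, |f j z - ∑ t : Fin (m n), lam j t * g ((T ^ (-((t : ℕ) : ℤ))) z)| ∂μ
      = ∫ z, |f j z - max (h j z) 0| ∂μ := by
    apply integral_congr_ae
    filter_upwards with z
    rw [hsum j z]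
  have hstep2 : ∫ z, |f j z - max (h j z) 0| ∂μ ≤ ∫ z, |f j z - h j z| ∂μ := by
    apply integral_mono ((hfint j).sub hint_max).abs ((hfint j).sub hint_h).abs
    intro z
    exact hpt z
  have hstep3 : ∫ z, |f j z - h j z| ∂μ = (eLpNorm (μ[f j| ℱ n] - f j) 1 μ).toReal := by
    have h1 : eLpNorm (μ[f j| ℱ n] - f j) 1 μ = eLpNorm (fun z => f j z - h j z) 1 μ := by
      have : (μ[f j| ℱ n] - f j) = -(fun z => f j z - h j z) := by
        funext z
        simp [hh]
      rw [this, eLpNorm_neg]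
    have h2 := integral_norm_eq_lintegral_enorm (μ := μ)
      (f := fun z => f j z - h j z) ((hfint j).sub hint_h).1
    rw [h1, eLpNorm_one_eq_lintegral_enorm, ← h2]
    simp [Real.norm_eq_abs]
  calc ∫ z, |f j z - ∑ t : Fin (m n), lam j t * g ((T ^ (-((t : ℕ) : ℤ))) z)| ∂μ
      = ∫ z, |f j z - max (h j z) 0| ∂μ := hstep1
    _ ≤ ∫ z, |f j z - h j z| ∂μ := hstep2
    _ = (eLpNorm (μ[f j| ℱ n] - f j) 1 μ).toReal := hstep3
    _ ≤ ε := ENNReal.toReal_le_of_le_ofReal hε.le (hn j).le
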